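/- For a,b,c ∈ ℂ with c, a+b+c+2 avoiding values making denominators vanish, the function g(a,b,c;z) = ₂F₁(−a, −a−b−c−1, −a−b; z) satisfies the contiguity relation (z(1−z)∂ + az + (c+1)) • g(a,b,c;z) = (c+1)·g(a,b,c+1;z) as formal power series. -/

import Mathlib

open PowerSeries

/-- The Pochhammer symbol `(q)ₙ`. -/
noncomputable def poch (q : ℂ) (n : ℕ) : ℂ := (ascPochhammer ℂ n).eval q

/-- The Gauss hypergeometric series `₂F₁(a,b,c;x) = Σ (a)ₙ(b)ₙ/((c)ₙ n!) xⁿ`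
as a formal power series. -/
noncomputable def F (a b c : ℂ) : PowerSeries ℂ :=
  PowerSeries.mk fun n => poch a n * poch b n / (poch c n * n.factorial)

/-- Formal differentiation `∂` on `ℂ⟦x⟧`. -/
noncomputable def Dps (f : PowerSeries ℂ) : PowerSeries ℂ := PowerSeries.derivative ℂ f

set_option maxHeartbeats 1000000

lemma poch_zero (q : ℂ) : poch q 0 = 1 := by simp [poch]

lemma poch_succ (q : ℂ) (n : ℕ) : poch q (n+1) = poch q n * (q + n) := by
  simp [poch, ascPochhammer_succ_right]

lemma poch_succ_left (q : ℂ) (n : ℕ) : poch q (n+1) = q * poch (q+1) n := by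
  simp [poch, ascPochhammer_succ_left]

lemma poch_ne_zero {q : ℂ} (h : ∀ n : ℕ, q ≠ -(n:ℂ)) (n : ℕ) : poch q n ≠ 0 := by
  induction n with
  | zero => simp [poch_zero]
  | succ m ih =>
    rw [poch_succ]
    exact mul_ne_zero ih (fun hc => h m (by linear_combination hc))

lemma coeff_X_mul_Dps (f : PowerSeries ℂ) (n : ℕ) :
    coeff n (X * Dps f) = n * coeff n f := by
  cases n with
  | zero => simp
  | succ m =>
    rw [coeff_succ_X_mul]
    simp [Dps, PowerSeries.coeff_derivative]
    push_cast
    ring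

lemma aux_arith (t u c A P B fac k : ℂ) (hB : B ≠ 0) (hu : u ≠ 0)
    (hfac : fac ≠ 0) (hk : k + 1 ≠ 0) :
    (k + 1) * (A * t * (P * (u - c - 1)) / (B * u * ((k + 1) * fac)))
      - k * (A * P / (B * fac))
      + ((k - t) * (A * P / (B * fac))
        + (c + 1) * (A * t * (P * (u - c - 1)) / (B * u * ((k + 1) * fac))))
    = (c + 1) * (A * t * ((u - k - c - 2) * P) / (B * u * ((k + 1) * fac))) := by
  have hd : (B * u * ((k + 1) * fac)) ≠ 0 :=
    mul_ne_zero (mul_ne_zero hB hu) (mul_ne_zero hk hfac)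
  have h2 : A * P / (B * fac) = A * P * (u * (k + 1)) / (B * u * ((k + 1) * fac)) := by
    rw [div_eq_div_iff (mul_ne_zero hB hfac) hd]; ring
  rw [h2]
  simp only [mul_div_assoc']
  rw [div_sub_div_same, ← add_div, ← add_div]
  rw [div_eq_div_iff hd hd]
  ring

/-- with `g(a,b,c;z) = ₂F₁(−a, −a−b−c−1, −a−b; z)`,
`(z(1−z)∂ + az + (c+1)) • g(a,b,c;z) = (c+1)·g(a,b,c+1;z)` as formal power
series, provided `−a−b` is not a nonpositive integer. -/
theorem contiguity_c_oshima (a b c : ℂ) (h : ∀ n : ℕ, -a - b ≠ -(n : ℂ)) :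
    X * (1 - X) * Dps (F (-a) (-a - b - c - 1) (-a - b))
        + (C a * X + C (c + 1)) * F (-a) (-a - b - c - 1) (-a - b)
      = C (c + 1) * F (-a) (-a - b - (c + 1) - 1) (-a - b) := by
  have key : ∀ f g : PowerSeries ℂ,
      X * (1 - X) * Dps f + (C a * X + C (c+1)) * f
        = (X * Dps f - X * (X * Dps f)) + (X * (C a * f) + C (c+1) * f) := by
    intro f g; ring
  rw [key _ 0]
  ext n
  simp only [LinearMap.map_add, LinearMap.map_sub]
  rw [coeff_X_mul_Dps, coeff_C_mul, coeff_C_mul]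
  cases n with
  | zero =>
    simp [F, poch_zero]
  | succ m =>
    rw [coeff_succ_X_mul, coeff_succ_X_mul, coeff_X_mul_Dps, coeff_C_mul]
    simp only [F, coeff_mk]
    have e1 : -a - b - (c + 1) - 1 = (-a - b - c - 1 - 1) := by ring
    have e2 : (-a - b - c - 1 - 1) + 1 = -a - b - c - 1 := by ring
    rw [e1, poch_succ_left (-a-b-c-1-1) m, e2, poch_succ (-a), poch_succ (-a-b-c-1), poch_succ (-a-b)]
    have hB := poch_ne_zero h m
    have hBm : (-a - b + (m:ℂ)) ≠ 0 := fun hc => h m (by linear_combination hc)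
    have hfac : ((m.factorial : ℂ)) ≠ 0 := by exact_mod_cast m.factorial_ne_zero
    have hm1 : ((m:ℂ) + 1) ≠ 0 := Nat.cast_add_one_ne_zero m
    rw [Nat.factorial_succ]
    push_cast
    linear_combination aux_arith (-a + (m:ℂ)) (-a - b + (m:ℂ)) c (poch (-a) m)
      (poch (-a - b - c - 1) m) (poch (-a - b) m) (m.factorial : ℂ) (m:ℂ)
      hB hBm hfac hm1
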